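/- Let C, D be categories and F, G: C → D two functors with a natural transformation α: F → G. Suppose there exist functors i: C' → C from a full subcategory and that α restricted to C' is an isomorphism, and every object of C is a colimit of objects of C' preserved by both F and G. Then α is a natural isomorphism. -/

import Mathlib

open CategoryTheory Limits

/-- Let `α : F ⟶ G` be a natural transformation between functors `C ⥤ D` whose components
are isomorphisms on a full subcategory `C' ⊆ C` (given by a fully faithful functor `i`).
If every object of `C` is a colimit of objects of `C'` and these colimits are preserved by
both `F` and `G`, then `α` is a natural isomorphism. -/
theorem stmt6 {C C' D : Type*} [Category C] [Category C'] [Category D]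
    (i : C' ⥤ C) [i.Full] [i.Faithful] (F G : C ⥤ D) (α : F ⟶ G)
    (hα : ∀ c' : C', IsIso (α.app (i.obj c')))
    (h : ∀ c : C, ∃ (J : Type) (_ : SmallCategory J) (Dg : J ⥤ C')
        (cc : Cocone (Dg ⋙ i)),
      Nonempty (IsColimit cc) ∧ Nonempty (IsColimit (F.mapCocone cc)) ∧
      Nonempty (IsColimit (G.mapCocone cc)) ∧ Nonempty (cc.pt ≅ c)) :
    IsIso α := by
  suffices ∀ c : C, IsIso (α.app c) by exact NatIso.isIso_of_isIso_app α
  intro c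
  obtain ⟨J, _, Dg, cc, ⟨_⟩, ⟨hF⟩, ⟨hG⟩, ⟨e⟩⟩ := h c
  -- the whiskered natural transformation is an isomorphism
  have : ∀ j, IsIso ((Functor.whiskerLeft (Dg ⋙ i) α).app j) := fun j => hα (Dg.obj j)
  have wiso : IsIso (Functor.whiskerLeft (Dg ⋙ i) α) := NatIso.isIso_of_isIso_app _
  -- α.app cc.pt is the canonical comparison map between the two colimits
  have key : α.app cc.pt = hF.map (G.mapCocone cc) (Functor.whiskerLeft (Dg ⋙ i) α) := by
    apply hF.hom_ext
    intro j
    rw [IsColimit.ι_map]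
    simp [(α.naturality (cc.ι.app j)).symm]
  have : IsIso (α.app cc.pt) := by
    rw [key]
    exact (IsColimit.coconePointsIsoOfNatIso hF hG (asIso (Functor.whiskerLeft (Dg ⋙ i) α))).isIso_hom
  have : α.app c = F.map e.inv ≫ α.app cc.pt ≫ G.map e.hom := by
    rw [← α.naturality e.hom, ← Functor.map_comp_assoc, e.inv_hom_id, F.map_id,
      Category.id_comp]
  rw [this]
  infer_instance
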